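/- arXiv:hep-th/9610061 — 4 statements merged into one kernel-verified Lean document; each statement's English description precedes it below -/
import Mathlib

section
/- Let g : ℝ → ℂ be a Schwartz function whose Fourier transform ĝ vanishes for all k ≤ 0 (so g is the boundary value of a function analytic and bounded in the upper half-plane). Then for every x₀ ∈ ℝ, lim_{ε→0⁺} (1/(2πi)) ∫_ℝ g(x)/(x − x₀ − iε) dx = g(x₀). -/
open MeasureTheory Set Filter
open scoped ENNReal

/-- The Fourier transform `f̂(p) = (2π)^{-1/2} ∫ f(y) e^{-ipy} dy`. -/
noncomputable def ft (f : ℝ → ℂ) (p : ℝ) : ℂ :=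
  (Real.sqrt (2 * Real.pi) : ℂ)⁻¹ *
    ∫ y : ℝ, f y * Complex.exp (-Complex.I * (p : ℂ) * (y : ℂ))

/-- `F̌(k) = (2π)^{-1/2} ∫ f(y) e^{-ik x(y)} dy`. -/
noncomputable def Fk (x : ℝ → ℝ) (f : ℝ → ℂ) (k : ℝ) : ℂ :=
  (Real.sqrt (2 * Real.pi) : ℂ)⁻¹ *
    ∫ y : ℝ, f y * Complex.exp (-Complex.I * (k : ℂ) * (x y : ℂ))

/-- The relativistic black-hole coordinate map `x_R(y) = -e^{-y}`. -/
noncomputable def xR (y : ℝ) : ℝ := -Real.exp (-y)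

/-- The CGHS black-hole coordinate map `x_C(y) = -log(1+e^{-y})`. -/
noncomputable def xC (y : ℝ) : ℝ := -Real.log (1 + Real.exp (-y))

/-- The mean number of spontaneously created particles `N̄_o[f]`. -/
noncomputable def No (x : ℝ → ℝ) (f : ℝ → ℂ) : ℝ≥0∞ :=
  ∫⁻ k in Set.Ioi (0:ℝ), ENNReal.ofReal (‖Fk x f (-k)‖ ^ 2 / (2 * k))

/-- The thermal mean particle number `N̄^Th_β[f]` at inverse temperature `β`. -/
noncomputable def Nth (β : ℝ) (f : ℝ → ℂ) : ℝ≥0∞ :=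
  ∫⁻ p in Set.Ioi (0:ℝ),
    ENNReal.ofReal (‖ft f p‖ ^ 2 / (2 * p * (Real.exp (β * p) - 1)))

/-- translate of `f` by `y₀`. -/
noncomputable def tr (f : ℝ → ℂ) (y₀ : ℝ) : ℝ → ℂ := fun y => f (y - y₀)

open Complex Real
open scoped FourierTransform

lemma norm_cexp' (z : ℂ) : ‖Complex.exp z‖ = Real.exp z.re := by
  rw [Complex.norm_exp]

lemma integral_cexp_Ioi_zero (c : ℂ) (hc : c.re < 0) :
    ∫ ξ in Ioi (0:ℝ), Complex.exp (c * ξ) = -c⁻¹ := by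
  have hc0 : c ≠ 0 := fun h => by simp [h] at hc
  have hderiv : ∀ x ∈ Ioi (0:ℝ),
      HasDerivAt (fun ξ : ℝ => c⁻¹ * Complex.exp (c * ξ)) (Complex.exp (c * x)) x := by
    intro x _
    have h1 : HasDerivAt (fun z : ℂ => c⁻¹ * Complex.exp (c * z))
        (Complex.exp (c * x)) (x : ℂ) := by
      have := (((Complex.hasDerivAt_exp (c * (x:ℂ))).comp _
        ((hasDerivAt_id (x:ℂ)).const_mul c))).const_mul c⁻¹
      have e : c⁻¹ * (Complex.exp (c * (x:ℂ)) * (c * 1)) = Complex.exp (c * x) := by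
        field_simp
      rw [e] at this
      exact this
    exact h1.comp_ofReal
  have hint : IntegrableOn (fun x : ℝ => Complex.exp (c * x)) (Ioi (0:ℝ)) := by
    refine (exp_neg_integrableOn_Ioi 0 (by linarith : (0:ℝ) < -c.re)).mono' ?_ ?_
    · exact (Complex.continuous_exp.comp (continuous_const.mul Complex.continuous_ofReal)).aestronglyMeasurable
    · filter_upwards with x
      rw [norm_cexp']
      simp [Complex.mul_re, neg_mul]
  have htend : Tendsto (fun x : ℝ => c⁻¹ * Complex.exp (c * x)) atTop (nhds 0) := by
    rw [tendsto_zero_iff_norm_tendsto_zero]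
    have : Tendsto (fun x : ℝ => ‖c⁻¹‖ * Real.exp (c.re * x)) atTop (nhds (‖c⁻¹‖ * 0)) := by
      refine Tendsto.const_mul _ ?_
      refine Real.tendsto_exp_atBot.comp ?_
      exact Tendsto.const_mul_atTop_of_neg hc tendsto_id
    refine Tendsto.congr (fun x => ?_) (by simpa using this)
    rw [norm_mul, norm_cexp']
    simp [Complex.mul_re]
  have hcont : ContinuousWithinAt (fun ξ : ℝ => c⁻¹ * Complex.exp (c * ξ)) (Ici (0:ℝ)) 0 :=
    (Continuous.continuousWithinAt (by continuity))
  have := integral_Ioi_of_hasDerivAt_of_tendsto hcont hderiv hint htend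
  simpa using this



set_option maxHeartbeats 1000000 in
/-- Cauchy–Plemelj formula for positive-frequency functions: if `g` is a
Schwartz function with `ĝ(k) = 0` for all `k ≤ 0`, then for every `x₀ ∈ ℝ`,
`lim_{ε→0⁺} (1/(2πi)) ∫ g(x)/(x - x₀ - iε) dx = g(x₀)`. -/
theorem stmt_5 (g : SchwartzMap ℝ ℂ) (hg : ∀ k : ℝ, k ≤ 0 → ft (⇑g) k = 0)
    (x₀ : ℝ) :
    Filter.Tendsto
      (fun ε : ℝ => (1 / (2 * (Real.pi : ℂ) * Complex.I)) *
        ∫ x : ℝ, g x / ((x : ℂ) - (x₀ : ℂ) - Complex.I * (ε : ℂ)))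
      (nhdsWithin 0 (Set.Ioi 0)) (nhds (g x₀)) := by
  set G : ℝ → ℂ := 𝓕 ⇑g with hGdef
  have hGs : ⇑(SchwartzMap.fourierTransformCLM ℂ g) = G := by
    rw [SchwartzMap.fourierTransformCLM_apply, SchwartzMap.fourier_coe]
  have hGi : Integrable G := by rw [← hGs]; exact (SchwartzMap.fourierTransformCLM ℂ g).integrable
  have hGc : Continuous G := by rw [← hGs]; exact (SchwartzMap.fourierTransformCLM ℂ g).continuous
  -- G vanishes on nonpositive frequencies
  have hG0 : ∀ ξ : ℝ, ξ ≤ 0 → G ξ = 0 := by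
    intro ξ hξ
    have h1 := hg (2 * Real.pi * ξ) (by nlinarith [Real.pi_pos])
    have hs : ((Real.sqrt (2 * Real.pi) : ℝ) : ℂ) ≠ 0 := by
      have : (0:ℝ) < Real.sqrt (2 * Real.pi) := Real.sqrt_pos.2 (by positivity)
      exact_mod_cast this.ne'
    rw [ft, mul_eq_zero] at h1
    have h2 : (∫ y : ℝ, g y * Complex.exp (-Complex.I * ((2 * Real.pi * ξ : ℝ) : ℂ) * (y : ℂ))) = 0 := by
      rcases h1 with h | h
      · exact absurd h (by simpa using hs)
      · exact h
    rw [hGdef, Real.fourier_real_eq_integral_exp_smul, ← h2]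
    congr 1 with y
    rw [smul_eq_mul, mul_comm]
    congr 1
    push_cast
    ring_nf
  -- Key identity for ε > 0
  have key : ∀ ε : ℝ, 0 < ε →
      (1 / (2 * (Real.pi : ℂ) * Complex.I)) *
        ∫ x : ℝ, g x / ((x : ℂ) - (x₀ : ℂ) - Complex.I * (ε : ℂ))
      = ∫ ξ in Ioi (0:ℝ), ((Real.exp (-(2*Real.pi*ε)*ξ) : ℝ) : ℂ) *
          (Complex.exp (((2*Real.pi*ξ*x₀ : ℝ) : ℂ) * Complex.I) * G ξ) := by
    intro ε hε
    set a : ℝ → ℂ := fun x => (x:ℂ) - (x₀:ℂ) - Complex.I * (ε:ℂ) with ha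
    have haim : ∀ x : ℝ, (a x).im = -ε := by intro x; simp [ha]
    set Φ : ℝ × ℝ → ℂ :=
      fun p => g p.1 * Complex.exp ((-2*(Real.pi:ℂ)*Complex.I*(p.2:ℂ)) * a p.1) with hΦ
    have hsplit : ∀ x ξ : ℝ, Complex.exp ((-2*(Real.pi:ℂ)*Complex.I*(ξ:ℂ)) * a x)
        = Complex.exp (((-2*Real.pi*x*ξ : ℝ) : ℂ) * Complex.I) *
          (Complex.exp (((2*Real.pi*ξ*x₀ : ℝ) : ℂ) * Complex.I) *
           ((Real.exp (-(2*Real.pi*ε)*ξ) : ℝ) : ℂ)) := by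
      intro x ξ
      rw [Complex.ofReal_exp, ← Complex.exp_add, ← Complex.exp_add]
      congr 1
      rw [ha]
      push_cast
      linear_combination (2*(Real.pi:ℂ)*ξ*ε) * Complex.I_sq
    have hΦnorm : ∀ p : ℝ × ℝ, ‖Φ p‖ = ‖g p.1‖ * Real.exp (-(2*Real.pi*ε)*p.2) := by
      intro p
      rw [hΦ]
      simp only [norm_mul]
      rw [hsplit p.1 p.2, norm_mul, norm_mul, Complex.norm_exp_ofReal_mul_I,
        Complex.norm_exp_ofReal_mul_I, Complex.norm_real, Real.norm_eq_abs, Real.abs_exp]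
      ring
    have hexpint : IntegrableOn (fun ξ : ℝ => Real.exp (-(2*Real.pi*ε)*ξ)) (Ioi (0:ℝ)) :=
      exp_neg_integrableOn_Ioi 0 (by positivity)
    have haC : Continuous a := by
      rw [ha]
      exact (Complex.continuous_ofReal.sub continuous_const).sub continuous_const
    have hΦmeas : AEStronglyMeasurable Φ
        ((volume : Measure ℝ).prod ((volume : Measure ℝ).restrict (Ioi (0:ℝ)))) := by
      apply Continuous.aestronglyMeasurable
      rw [hΦ]
      exact (g.continuous.comp continuous_fst).mul (Complex.continuous_exp.comp
        ((continuous_const.mul (Complex.continuous_ofReal.comp continuous_snd)).mul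
          (haC.comp continuous_fst)))
    have hΦint : Integrable Φ
        ((volume : Measure ℝ).prod ((volume : Measure ℝ).restrict (Ioi (0:ℝ)))) := by
      refine Integrable.mono' (g.integrable.norm.mul_prod hexpint) hΦmeas ?_
      filter_upwards with p
      rw [hΦnorm p]
    have swap := integral_integral_swap (f := fun x ξ => Φ (x, ξ)) hΦint
    have lhs_eq : (1 / (2 * (Real.pi : ℂ) * Complex.I)) * (∫ x : ℝ, g x / a x)
        = ∫ x : ℝ, ∫ ξ in Ioi (0:ℝ), Φ (x, ξ) := by
      rw [← integral_const_mul]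
      congr 1 with x
      have hc : ((-2*(Real.pi:ℂ)*Complex.I) * a x).re < 0 := by
        have h1 : ((-2*(Real.pi:ℂ)*Complex.I) * a x).re = 2 * Real.pi * (a x).im := by
          simp [Complex.mul_re, Complex.mul_im]
        rw [h1, haim x]
        nlinarith [Real.pi_pos]
      have hane : a x ≠ 0 := by
        intro h
        have := haim x
        rw [h] at this
        simp at this
        linarith
      calc (1 / (2 * (Real.pi : ℂ) * Complex.I)) * (g x / a x)
          = g x * (-((-2*(Real.pi:ℂ)*Complex.I) * a x)⁻¹) := by
            have hπ : ((Real.pi:ℂ)) ≠ 0 := by exact_mod_cast Real.pi_ne_zero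
            field_simp
        _ = ∫ ξ in Ioi (0:ℝ), g x * Complex.exp (((-2*(Real.pi:ℂ)*Complex.I) * a x) * ξ) := by
            rw [integral_const_mul, integral_cexp_Ioi_zero _ hc]
        _ = ∫ ξ in Ioi (0:ℝ), Φ (x, ξ) := by
            congr 1 with ξ
            simp only [hΦ]
            congr 2
            ring
    rw [lhs_eq, swap]
    congr 1 with ξ
    calc (∫ x : ℝ, Φ (x, ξ))
        = ∫ x : ℝ, (Complex.exp (((2*Real.pi*ξ*x₀ : ℝ) : ℂ) * Complex.I) *
            ((Real.exp (-(2*Real.pi*ε)*ξ) : ℝ) : ℂ)) *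
            (Complex.exp (((-2*Real.pi*x*ξ : ℝ) : ℂ) * Complex.I) • g x) := by
          congr 1 with x
          simp only [hΦ]
          rw [hsplit x ξ, smul_eq_mul]
          ring
      _ = (Complex.exp (((2*Real.pi*ξ*x₀ : ℝ) : ℂ) * Complex.I) *
            ((Real.exp (-(2*Real.pi*ε)*ξ) : ℝ) : ℂ)) * G ξ := by
          rw [integral_const_mul, hGdef, Real.fourier_real_eq_integral_exp_smul]
      _ = ((Real.exp (-(2*Real.pi*ε)*ξ) : ℝ) : ℂ) *
            (Complex.exp (((2*Real.pi*ξ*x₀ : ℝ) : ℂ) * Complex.I) * G ξ) := by ring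
  -- The limit integral equals g x₀
  have lim_eq : (∫ ξ in Ioi (0:ℝ), Complex.exp (((2*Real.pi*ξ*x₀ : ℝ) : ℂ) * Complex.I) * G ξ)
      = g x₀ := by
    rw [setIntegral_eq_integral_of_forall_compl_eq_zero (fun ξ hξ => by
      have hξ' : ξ ≤ 0 := by simpa using hξ
      simp [hG0 ξ hξ'])]
    have : (∫ ξ : ℝ, Complex.exp (((2*Real.pi*ξ*x₀ : ℝ) : ℂ) * Complex.I) * G ξ) = 𝓕 G (-x₀) := by
      rw [Real.fourier_real_eq_integral_exp_smul]
      congr 1 with ξ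
      rw [smul_eq_mul]
      norm_num
    rw [this, ← Real.fourierInv_eq_fourier_neg]
    exact g.integrable.fourierInv_fourier_eq hGi g.continuous.continuousAt
  -- Dominated convergence
  have dct : Tendsto (fun ε : ℝ => ∫ ξ in Ioi (0:ℝ), ((Real.exp (-(2*Real.pi*ε)*ξ) : ℝ) : ℂ) *
          (Complex.exp (((2*Real.pi*ξ*x₀ : ℝ) : ℂ) * Complex.I) * G ξ)) (nhdsWithin 0 (Set.Ioi 0))
      (nhds (∫ ξ in Ioi (0:ℝ), Complex.exp (((2*Real.pi*ξ*x₀ : ℝ) : ℂ) * Complex.I) * G ξ)) := by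
    apply tendsto_integral_filter_of_dominated_convergence (fun ξ => ‖G ξ‖)
    · filter_upwards with ε
      apply Continuous.aestronglyMeasurable
      exact (Complex.continuous_ofReal.comp (Real.continuous_exp.comp
          (continuous_const.mul continuous_id))).mul
        ((Complex.continuous_exp.comp ((Complex.continuous_ofReal.comp
          ((continuous_const.mul continuous_id).mul continuous_const)).mul
          continuous_const)).mul hGc)
    · filter_upwards [self_mem_nhdsWithin] with ε (hε : 0 < ε)
      rw [ae_restrict_iff' measurableSet_Ioi]
      filter_upwards with ξ hξ
      have hξ' : (0:ℝ) < ξ := hξ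
      simp only [norm_mul, Complex.norm_real, Real.norm_eq_abs, Real.abs_exp]
      rw [Complex.norm_exp_ofReal_mul_I, one_mul]
      have h1 : Real.exp (-(2*Real.pi*ε)*ξ) ≤ 1 := by
        rw [Real.exp_le_one_iff]
        have := mul_pos (mul_pos (mul_pos (by norm_num : (0:ℝ) < 2) Real.pi_pos) hε) hξ'
        nlinarith
      nlinarith [norm_nonneg (G ξ), Real.exp_pos (-(2*Real.pi*ε)*ξ)]
    · exact hGi.norm.restrict
    · filter_upwards with ξ
      have hc : Tendsto (fun ε : ℝ => ((Real.exp (-(2*Real.pi*ε)*ξ) : ℝ) : ℂ))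
          (nhdsWithin 0 (Set.Ioi 0)) (nhds 1) := by
        have : Continuous fun ε : ℝ => ((Real.exp (-(2*Real.pi*ε)*ξ) : ℝ) : ℂ) :=
          Complex.continuous_ofReal.comp (Real.continuous_exp.comp
            ((continuous_const.mul continuous_id).neg.mul continuous_const))
        have h0 := (this.tendsto 0).mono_left (nhdsWithin_le_nhds (s := Set.Ioi 0))
        simpa using h0
      simpa using hc.mul_const _
  rw [lim_eq] at dct
  refine Tendsto.congr' ?_ dct
  filter_upwards [self_mem_nhdsWithin] with ε (hε : 0 < ε)
  exact (key ε hε).symm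
end

section
/- Let x = x_C be the CGHS map x_C(y) = −log(1 + e^{−y}) (which satisfies 0 < x′(y) < 1 for all y ∈ ℝ). Let g : ℝ → ℂ be a Schwartz function with ĝ(k) = 0 for all k ≤ 0 and ∫_ℝ |g(x)|² dx = 1. Then 0 < ∫_ℝ x′(y)² |g(x(y))|² dy < 1. Interpreted in terms of energies, the outgoing energy E_g^{out} = E_o^{out} + ½∫_ℝ x′(y)²|g(x(y))|² dy of the radiation stimulated by the one-particle state Ω_g satisfies E_o^{out} < E_g^{out} < E_o^{out} + E_g^{in}, where E_g^{in} = ½∫_ℝ |g(x)|² dx. -/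
open MeasureTheory Set Filter
open scoped ENNReal
open Topology

noncomputable def dC (y : ℝ) : ℝ := Real.exp (-y) / (1 + Real.exp (-y))

lemma dC_pos (y : ℝ) : 0 < dC y := by
  unfold dC; positivity

lemma dC_lt_one (y : ℝ) : dC y < 1 := by
  unfold dC
  rw [div_lt_one (by positivity)]
  linarith

lemma hasDerivAt_xC (y : ℝ) : HasDerivAt xC (dC y) y := by
  have h0 : HasDerivAt (fun y : ℝ => -y) (-1) y := (hasDerivAt_id y).neg
  have h1 : HasDerivAt (fun y : ℝ => 1 + Real.exp (-y)) (-Real.exp (-y)) y := by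
    have := (Real.hasDerivAt_exp (-y)).comp y h0
    simpa using this.const_add 1
  have hpos : (0:ℝ) < 1 + Real.exp (-y) := by positivity
  have := (h1.log hpos.ne').neg
  have e : xC = -fun y => Real.log (1 + Real.exp (-y)) := by funext y; simp [xC]
  rw [e]
  simpa [dC, neg_div] using this

lemma deriv_xC : deriv xC = dC := funext fun y => (hasDerivAt_xC y).deriv

lemma continuous_dC : Continuous dC := by
  unfold dC
  exact (Real.continuous_exp.comp continuous_neg).div
    (continuous_const.add (Real.continuous_exp.comp continuous_neg))
    (fun y => by positivity)

lemma xC_strictMono : StrictMono xC := by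
  intro a b h
  have h1 : Real.exp (-b) < Real.exp (-a) := Real.exp_lt_exp.2 (by linarith)
  have := Real.log_lt_log (by positivity) (show 1 + Real.exp (-b) < 1 + Real.exp (-a) by linarith)
  simpa [xC] using neg_lt_neg this

lemma xC_neg (y : ℝ) : xC y < 0 := by
  have : (1:ℝ) < 1 + Real.exp (-y) := by have := Real.exp_pos (-y); linarith
  simpa [xC] using Real.log_pos this

lemma range_xC : Set.range xC = Set.Iio 0 := by
  ext x
  constructor
  · rintro ⟨y, rfl⟩; exact xC_neg y
  · intro hx
    have hx' : (0:ℝ) < -x := by simpa using hx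
    have h1 : (1:ℝ) < Real.exp (-x) := by
      rw [show (1:ℝ) = Real.exp 0 by simp]
      exact Real.exp_lt_exp.2 hx'
    refine ⟨-Real.log (Real.exp (-x) - 1), ?_⟩
    have h2 : (0:ℝ) < Real.exp (-x) - 1 := by linarith
    simp only [xC, neg_neg, Real.exp_log h2]
    rw [show 1 + (Real.exp (-x) - 1) = Real.exp (-x) by ring, Real.log_exp]
    simp

noncomputable def EE (u : ℝ → ℂ) (z : ℂ) : ℂ :=
  ∫ y : ℝ, u y * Complex.exp (Complex.I * z * (y : ℂ))

lemma exp_re_eq (z : ℂ) (y : ℝ) : (Complex.I * z * (y : ℂ)).re = -z.im * y := by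
  simp [Complex.mul_re, Complex.mul_im]

lemma norm_exp_le {z : ℂ} (hz : 0 ≤ z.im) {y : ℝ} (hy : 0 ≤ y) :
    ‖Complex.exp (Complex.I * z * (y : ℂ))‖ ≤ 1 := by
  rw [Complex.norm_exp, exp_re_eq]
  have h : -z.im * y ≤ 0 := mul_nonpos_of_nonpos_of_nonneg (by linarith) hy
  exact Real.exp_le_one_iff.mpr h

section EEprops

variable {u : ℝ → ℂ} (hc : Continuous u) (hneg : ∀ y : ℝ, y < 0 → u y = 0)

include hc hneg in
lemma EE_bound {z : ℂ} (hz : 0 ≤ z.im) :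
    ∀ᵐ y : ℝ, ‖u y * Complex.exp (Complex.I * z * (y : ℂ))‖ ≤ ‖u y‖ := by
  refine Eventually.of_forall fun y => ?_
  rcases lt_or_ge y 0 with hy | hy
  · simp [hneg y hy]
  · rw [norm_mul]
    calc ‖u y‖ * ‖Complex.exp (Complex.I * z * (y:ℂ))‖ ≤ ‖u y‖ * 1 :=
          mul_le_mul_of_nonneg_left (norm_exp_le hz hy) (norm_nonneg _)
      _ = ‖u y‖ := mul_one _

include hc hneg in
lemma EE_integrand_integrable (hint : Integrable u) {z : ℂ} (hz : 0 ≤ z.im) :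
    Integrable (fun y : ℝ => u y * Complex.exp (Complex.I * z * (y : ℂ))) := by
  refine Integrable.mono' hint.norm ?_ (EE_bound hc hneg hz)
  exact (hc.mul (Complex.continuous_exp.comp (by continuity))).aestronglyMeasurable

include hc hneg in
lemma EE_norm_le (hint : Integrable u) {z : ℂ} (hz : 0 ≤ z.im) :
    ‖EE u z‖ ≤ ∫ y : ℝ, ‖u y‖ := by
  refine (norm_integral_le_of_norm_le hint.norm (EE_bound hc hneg hz))

include hc hneg in
lemma EE_continuousOn (hint : Integrable u) :
    ContinuousOn (EE u) {z : ℂ | 0 ≤ z.im} := by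
  refine continuousOn_of_dominated ?_ ?_ hint.norm ?_
  · intro z hz
    exact (hc.mul (Complex.continuous_exp.comp (by continuity))).aestronglyMeasurable
  · intro z hz
    exact EE_bound hc hneg hz
  · refine Eventually.of_forall fun y => ?_
    exact (Continuous.continuousOn (by continuity))

include hc hneg in
set_option maxHeartbeats 1000000 in
lemma EE_differentiableAt (hint : Integrable u)
    (hint1 : Integrable fun y : ℝ => |y| * ‖u y‖) {z₀ : ℂ} (hz₀ : 0 < z₀.im) :
    DifferentiableAt ℂ (EE u) z₀ := by
  set F' : ℂ → ℝ → ℂ := fun z y => u y * (Complex.exp (Complex.I * z * y) * (Complex.I * y))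
  have key := hasDerivAt_integral_of_dominated_loc_of_deriv_le
    (F := fun z (y : ℝ) => u y * Complex.exp (Complex.I * z * (y : ℂ)))
    (F' := F') (x₀ := z₀) (bound := fun y : ℝ => |y| * ‖u y‖)
    (Metric.ball_mem_nhds z₀ (half_pos hz₀)) ?_ ?_ ?_ ?_ hint1 ?_
  · exact key.2.differentiableAt
  · refine Eventually.of_forall fun z => ?_
    exact (hc.mul (Complex.continuous_exp.comp (by continuity))).aestronglyMeasurable
  · exact EE_integrand_integrable hc hneg hint hz₀.le
  · have hcF : Continuous (F' z₀) := by
      apply hc.mul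
      exact (Complex.continuous_exp.comp (by continuity)).mul
        (continuous_const.mul Complex.continuous_ofReal)
    exact hcF.aestronglyMeasurable
  · refine Eventually.of_forall fun y => fun z hz => ?_
    have hzim : 0 ≤ z.im := by
      have := Complex.abs_im_le_norm (z - z₀)
      have hd : dist z z₀ < z₀.im / 2 := by simpa [Metric.mem_ball] using hz
      rw [Complex.dist_eq] at hd
      have : |z.im - z₀.im| < z₀.im / 2 := by
        calc |z.im - z₀.im| = |(z - z₀).im| := by simp
          _ ≤ ‖z - z₀‖ := Complex.abs_im_le_norm _
          _ < z₀.im / 2 := hd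
      have := abs_lt.mp this
      linarith
    rcases lt_or_ge y 0 with hy | hy
    · simp [F', hneg y hy]
    · rw [show F' z y = (u y * Complex.exp (Complex.I * z * y)) * (Complex.I * y) by ring]
      rw [norm_mul]
      have h1 : ‖u y * Complex.exp (Complex.I * z * (y:ℂ))‖ ≤ ‖u y‖ := by
        rw [norm_mul]
        calc ‖u y‖ * ‖Complex.exp (Complex.I * z * (y:ℂ))‖ ≤ ‖u y‖ * 1 :=
              mul_le_mul_of_nonneg_left (norm_exp_le hzim hy) (norm_nonneg _)
          _ = ‖u y‖ := mul_one _
      have h2 : ‖Complex.I * (y:ℂ)‖ = |y| := by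
        simp
      rw [h2]
      calc ‖u y * Complex.exp (Complex.I * z * (y:ℂ))‖ * |y| ≤ ‖u y‖ * |y| :=
            mul_le_mul_of_nonneg_right h1 (abs_nonneg y)
        _ = |y| * ‖u y‖ := mul_comm _ _
  · refine Eventually.of_forall fun y => fun z hz => ?_
    have h : HasDerivAt (fun w : ℂ => Complex.I * w * (y:ℂ)) (Complex.I * y) z := by
      simpa [mul_comm, mul_assoc] using
        (((hasDerivAt_id z).const_mul Complex.I).mul_const (y:ℂ))
    exact ((h.cexp).const_mul (u y))

end EEprops

lemma sqrt2pi_ne : ((Real.sqrt (2 * Real.pi) : ℝ) : ℂ) ≠ 0 := by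
  have : (0:ℝ) < Real.sqrt (2 * Real.pi) :=
    Real.sqrt_pos.mpr (by positivity)
  exact_mod_cast this.ne'

open scoped FourierTransform in
lemma key (g : SchwartzMap ℝ ℂ) (hg : ∀ k : ℝ, k ≤ 0 → ft (⇑g) k = 0)
    (h0 : ∀ x : ℝ, x < 0 → g x = 0) : g = 0 := by
  classical
  set u : ℝ → ℂ := ⇑g with hu
  set uc : ℝ → ℂ := fun y => (starRingEnd ℂ) (g y) with huc
  have hcu : Continuous u := g.continuous
  have hcuc : Continuous uc := continuous_star.comp g.continuous
  have hnegu : ∀ y : ℝ, y < 0 → u y = 0 := h0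
  have hneguc : ∀ y : ℝ, y < 0 → uc y = 0 := fun y hy => by simp only [huc]; rw [show g y = 0 from hnegu y hy]; simp
  have hintu : Integrable u := g.integrable
  have hintuc : Integrable uc := by
    refine hintu.norm.mono' hcuc.aestronglyMeasurable ?_
    exact Eventually.of_forall fun y => by simp [huc, hu]
  have hint1 : Integrable fun y : ℝ => |y| * ‖u y‖ := by
    have := g.integrable_pow_mul (volume) 1
    simpa [Real.norm_eq_abs] using this
  have hint1c : Integrable fun y : ℝ => |y| * ‖uc y‖ := by
    refine hint1.congr (Eventually.of_forall fun y => by simp [huc, hu])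
  -- the two analytic factors
  -- boundary values on the real axis
  have hEu0 : ∀ t : ℝ, 0 ≤ t → EE u ↑t = 0 := by
    intro t ht
    have h := hg (-t) (by linarith)
    unfold ft at h
    rcases mul_eq_zero.mp h with h' | h'
    · exact absurd h' (inv_ne_zero sqrt2pi_ne)
    · have heq : ∀ y : ℝ, -Complex.I * ((-t : ℝ) : ℂ) * (y : ℂ)
          = Complex.I * (t : ℂ) * (y : ℂ) := fun y => by push_cast; ring
      unfold EE
      rw [show (fun y : ℝ => u y * Complex.exp (Complex.I * (↑t) * (y:ℂ)))
          = fun y : ℝ => g y * Complex.exp (-Complex.I * ((-t : ℝ):ℂ) * (y:ℂ)) from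
          funext fun y => by rw [heq y]]
      exact h'
  have hEuc0 : ∀ t : ℝ, t ≤ 0 → EE uc ↑t = 0 := by
    intro t ht
    have h := hg t ht
    unfold ft at h
    rcases mul_eq_zero.mp h with h' | h'
    · exact absurd h' (inv_ne_zero sqrt2pi_ne)
    · unfold EE
      have heq : ∀ y : ℝ, uc y * Complex.exp (Complex.I * (t : ℂ) * (y : ℂ))
          = (starRingEnd ℂ) (g y * Complex.exp (-Complex.I * (t : ℂ) * (y : ℂ))) := by
        intro y
        rw [map_mul, ← Complex.exp_conj]
        congr 2
        simp [Complex.conj_ofReal]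
        try ring
      rw [integral_congr_ae (Eventually.of_forall heq), integral_conj, h', map_zero]
  -- Phragmen-Lindelof on the right half plane for Φ
  set Φ : ℂ → ℂ := fun w => EE u (Complex.I * w) * EE uc (Complex.I * w) with hΦ
  have him_eq : ∀ w : ℂ, (Complex.I * w).im = w.re := fun w => by
    simp [Complex.mul_im]
  set M : ℝ := ∫ y : ℝ, ‖u y‖ with hM
  have hMc : (∫ y : ℝ, ‖uc y‖) = M := by
    rw [hM]
    exact integral_congr_ae (Eventually.of_forall fun y => by simp [huc, hu])
  have hM0 : 0 ≤ M := integral_nonneg fun y => norm_nonneg _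
  have hΦ_bdd : ∀ w : ℂ, 0 ≤ w.re → ‖Φ w‖ ≤ M * M := by
    intro w hw
    rw [hΦ]
    simp only [norm_mul]
    have h1 := EE_norm_le hcu hnegu hintu (z := Complex.I * w) (by rw [him_eq]; exact hw)
    have h2 := EE_norm_le hcuc hneguc hintuc (z := Complex.I * w) (by rw [him_eq]; exact hw)
    rw [hMc] at h2
    exact mul_le_mul (by simpa [hM] using h1) h2 (norm_nonneg _) hM0
  have hd : DiffContOnCl ℂ Φ {z : ℂ | 0 < z.re} := by
    constructor
    · intro w hw
      have hwim : 0 < (Complex.I * w).im := by rw [him_eq]; exact hw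
      have hiw : DifferentiableAt ℂ (fun w : ℂ => Complex.I * w) w :=
        (differentiable_id.const_mul Complex.I).differentiableAt
      have h1 : DifferentiableAt ℂ (fun w : ℂ => EE u (Complex.I * w)) w :=
        (EE_differentiableAt hcu hnegu hintu hint1 hwim).comp w hiw
      have h2 : DifferentiableAt ℂ (fun w : ℂ => EE uc (Complex.I * w)) w :=
        (EE_differentiableAt hcuc hneguc hintuc hint1c hwim).comp w hiw
      exact (h1.mul h2).differentiableWithinAt
    · rw [Complex.closure_setOf_lt_re]
      have hmaps : MapsTo (fun w : ℂ => Complex.I * w) {z : ℂ | 0 ≤ z.re} {z : ℂ | 0 ≤ z.im} :=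
        fun w hw => by simpa [him_eq] using hw
      have hiwc : ContinuousOn (fun w : ℂ => Complex.I * w) {z : ℂ | 0 ≤ z.re} :=
        (continuous_const.mul continuous_id).continuousOn
      exact ((EE_continuousOn hcu hnegu hintu).comp hiwc hmaps).mul
        ((EE_continuousOn hcuc hneguc hintuc).comp hiwc hmaps)
  have hexp : ∃ c < (2:ℝ), ∃ B, Φ =O[Bornology.cobounded ℂ ⊓ 𝓟 {z : ℂ | 0 < z.re}]
      fun z => Real.exp (B * ‖z‖ ^ c) := by
    refine ⟨1, one_lt_two, 0, ?_⟩
    refine Asymptotics.IsBigO.of_bound (M * M) ?_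
    rw [eventually_inf_principal]
    refine Eventually.of_forall fun z hz => ?_
    simp only [zero_mul, Real.exp_zero, norm_one, mul_one]
    exact hΦ_bdd z (le_of_lt hz)
  have hre : IsBoundedUnder (· ≤ ·) atTop fun x : ℝ => ‖Φ x‖ := by
    refine isBoundedUnder_of_eventually_le (a := M * M) ?_
    filter_upwards [eventually_ge_atTop (0:ℝ)] with x hx
    exact hΦ_bdd x (by simpa using hx)
  have him : ∀ x : ℝ, ‖Φ (x * Complex.I)‖ ≤ 0 := by
    intro x
    have harg : Complex.I * ((x:ℂ) * Complex.I) = (((-x : ℝ)) : ℂ) := by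
      push_cast
      rw [show Complex.I * ((x:ℂ) * Complex.I) = (Complex.I * Complex.I) * (x:ℂ) from by ring,
        Complex.I_mul_I]
      ring
    rw [hΦ]
    simp only [harg]
    rcases le_total x 0 with hx | hx
    · rw [hEu0 (-x) (by linarith), zero_mul, norm_zero]
    · rw [hEuc0 (-x) (by linarith), mul_zero, norm_zero]
  have hPL : ∀ z : ℂ, 0 ≤ z.re → ‖Φ z‖ ≤ 0 := fun z hz =>
    PhragmenLindelof.right_half_plane_of_bounded_on_real hd hexp hre him hz
  -- hence EE u vanishes on the positive imaginary axis
  have hconjE : ∀ t : ℝ, EE uc (Complex.I * ↑t) = (starRingEnd ℂ) (EE u (Complex.I * ↑t)) := by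
    intro t
    have hexp_real : ∀ y : ℝ, Complex.exp (Complex.I * (Complex.I * (t:ℂ)) * (y:ℂ))
        = ((Real.exp (-(t*y)) : ℝ) : ℂ) := by
      intro y
      rw [show Complex.I * (Complex.I * (t:ℂ)) * (y:ℂ)
          = (Complex.I * Complex.I) * ((t:ℂ) * (y:ℂ)) from by ring, Complex.I_mul_I]
      rw [Complex.ofReal_exp]
      push_cast
      ring_nf
    unfold EE
    rw [← integral_conj]
    refine integral_congr_ae (Eventually.of_forall fun y => ?_)
    simp only [hexp_real y, map_mul, huc]
    rw [Complex.conj_ofReal]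
  have hEzero_im : ∀ t : ℝ, 0 < t → EE u (Complex.I * ↑t) = 0 := by
    intro t ht
    have h := hPL (↑t : ℂ) (by simp [ht.le])
    have hΦt : Φ ↑t = 0 := by
      have := norm_le_zero_iff.mp h
      exact this
    rw [hΦ] at hΦt
    simp only [hconjE t] at hΦt
    rw [Complex.mul_conj] at hΦt
    have := Complex.normSq_eq_zero.mp (by exact_mod_cast hΦt)
    exact this
  -- identity theorem: EE u vanishes on the open upper half plane
  have hUopen : IsOpen {z : ℂ | 0 < z.im} := isOpen_lt continuous_const Complex.continuous_im
  have hdiffU : DifferentiableOn ℂ (EE u) {z : ℂ | 0 < z.im} := fun z hz =>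
    (EE_differentiableAt hcu hnegu hintu hint1 hz).differentiableWithinAt
  have han : AnalyticOnNhd ℂ (EE u) {z : ℂ | 0 < z.im} := hdiffU.analyticOnNhd hUopen
  have hpre : IsPreconnected {z : ℂ | 0 < z.im} :=
    (convex_halfSpace_im_gt (r := 0)).isPreconnected
  have hIU : Complex.I ∈ {z : ℂ | 0 < z.im} := by simp
  set a : ℕ → ℂ := fun n => Complex.I * ((1 + 1/((n:ℝ)+1) : ℝ) : ℂ) with ha
  have ha_pos : ∀ n : ℕ, (0:ℝ) < 1 + 1/((n:ℝ)+1) := fun n => by positivity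
  have ha_zero : ∀ n : ℕ, EE u (a n) = 0 := fun n => hEzero_im _ (ha_pos n)
  have ha_ne : ∀ n : ℕ, a n ≠ Complex.I := by
    intro n h
    rw [ha] at h
    simp only [] at h
    have h1 : ((1 + 1/((n:ℝ)+1) : ℝ) : ℂ) = 1 := by
      have := mul_left_cancel₀ Complex.I_ne_zero (h.trans (mul_one Complex.I).symm)
      exact this
    have h2 : (1 + 1/((n:ℝ)+1) : ℝ) = 1 := by exact_mod_cast h1
    have := ha_pos n
    have h3 : 1/((n:ℝ)+1) > 0 := by positivity
    linarith
  have ha_tendsto : Tendsto a atTop (𝓝[≠] Complex.I) := by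
    refine tendsto_nhdsWithin_of_tendsto_nhds_of_eventually_within _ ?_
      (Eventually.of_forall fun n => ha_ne n)
    have h1 : Tendsto (fun n : ℕ => (1 + 1/((n:ℝ)+1) : ℝ)) atTop (𝓝 1) := by
      have := (tendsto_one_div_add_atTop_nhds_zero_nat :
        Tendsto (fun n : ℕ => 1 / ((n:ℝ) + 1)) atTop (𝓝 0))
      simpa using (this.const_add 1)
    have h2 : Tendsto (fun n : ℕ => ((1 + 1/((n:ℝ)+1) : ℝ) : ℂ)) atTop (𝓝 (1:ℂ)) := by
      exact_mod_cast (Complex.continuous_ofReal.tendsto 1).comp h1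
    simpa [ha] using h2.const_mul Complex.I
  have hfreq : ∃ᶠ z in 𝓝[≠] Complex.I, EE u z = 0 :=
    ha_tendsto.frequently (Frequently.of_forall ha_zero)
  have hEU : EqOn (EE u) 0 {z : ℂ | 0 < z.im} :=
    han.eqOn_zero_of_preconnected_of_frequently_eq_zero hpre hIU hfreq
  -- boundary values: EE u vanishes on the real axis
  have hEreal : ∀ t : ℝ, EE u ↑t = 0 := by
    intro t
    have hmem : (↑t : ℂ) ∈ {z : ℂ | 0 ≤ z.im} := by simp
    have hcw : ContinuousWithinAt (EE u) {z : ℂ | 0 ≤ z.im} ↑t :=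
      (EE_continuousOn hcu hnegu hintu) _ hmem
    set b : ℕ → ℂ := fun n => ↑t + Complex.I * ((1/((n:ℝ)+1) : ℝ) : ℂ) with hb
    have hbU : ∀ n, b n ∈ {z : ℂ | 0 < z.im} := by
      intro n
      have him' : (b n).im = 1/((n:ℝ)+1) := by
        simp only [hb, Complex.add_im, Complex.mul_im, Complex.ofReal_im, Complex.ofReal_re,
          Complex.I_re, Complex.I_im, zero_mul, one_mul, zero_add, mul_zero, add_zero]
      show 0 < (b n).im
      rw [him']
      positivity
    have hb_tendsto : Tendsto b atTop (𝓝[{z : ℂ | 0 ≤ z.im}] ↑t) := by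
      refine tendsto_nhdsWithin_of_tendsto_nhds_of_eventually_within _ ?_
        (Eventually.of_forall fun n => show 0 ≤ (b n).im from (hbU n).le)
      have h1 : Tendsto (fun n : ℕ => ((1/((n:ℝ)+1) : ℝ) : ℂ)) atTop (𝓝 (0:ℂ)) := by
        exact_mod_cast (Complex.continuous_ofReal.tendsto 0).comp
          tendsto_one_div_add_atTop_nhds_zero_nat
      have := (h1.const_mul Complex.I).const_add (↑t : ℂ)
      simpa [hb] using this
    have h2 : Tendsto (fun n => EE u (b n)) atTop (𝓝 (EE u ↑t)) :=
      hcw.tendsto.comp hb_tendsto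
    have h3 : (fun n => EE u (b n)) = fun _ => (0:ℂ) := funext fun n => hEU (hbU n)
    rw [h3] at h2
    exact tendsto_nhds_unique h2 tendsto_const_nhds
  -- the Fourier transform of g vanishes identically, hence g = 0
  have h𝓕 : ∀ w : ℝ, (𝓕 ⇑g) w = 0 := by
    intro w
    rw [Real.fourier_real_eq_integral_exp_smul]
    have heq : ∀ v : ℝ, Complex.exp (↑(-2 * Real.pi * v * w) * Complex.I) • g v
        = u v * Complex.exp (Complex.I * ((-2 * Real.pi * w : ℝ) : ℂ) * (v : ℂ)) := by
      intro v
      rw [smul_eq_mul, mul_comm]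
      congr 1
      push_cast
      ring
    rw [integral_congr_ae (Eventually.of_forall heq)]
    exact hEreal (-2 * Real.pi * w)
  have hg0 : (SchwartzMap.fourierTransformCLE ℂ (SchwartzMap ℝ ℂ)) g = 0 := by
    ext x
    change 𝓕 (⇑g) x = (0 : ℝ → ℂ) x
    simpa using h𝓕 x
  exact (SchwartzMap.fourierTransformCLE ℂ (SchwartzMap ℝ ℂ)).injective (by rw [hg0, map_zero])

/-- For the CGHS map (with `0 < x_C'(y) < 1`) and a Schwartz function `g`
of positive-frequency type with `∫ |g|² = 1`, one has
`0 < ∫ x'(y)²|g(x(y))|² dy < 1`; equivalently, the stimulated outgoing energy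
`E_g^{out} = E_o^{out} + ½∫ x'(y)²|g(x(y))|² dy` satisfies
`E_o^{out} < E_g^{out} < E_o^{out} + E_g^{in}` where `E_g^{in} = ½∫ |g|²`. -/
theorem stmt_6 (g : SchwartzMap ℝ ℂ) (hg : ∀ k : ℝ, k ≤ 0 → ft (⇑g) k = 0)
    (hnorm : (∫ x : ℝ, ‖g x‖ ^ 2) = 1) :
    (0 < ∫ y : ℝ, (deriv xC y) ^ 2 * ‖g (xC y)‖ ^ 2) ∧
    (∫ y : ℝ, (deriv xC y) ^ 2 * ‖g (xC y)‖ ^ 2) < 1 ∧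
    ∀ Eo : ℝ,
      (Eo < Eo + (1/2) * ∫ y : ℝ, (deriv xC y) ^ 2 * ‖g (xC y)‖ ^ 2) ∧
      (Eo + (1/2) * (∫ y : ℝ, (deriv xC y) ^ 2 * ‖g (xC y)‖ ^ 2) <
        Eo + (1/2) * ∫ x : ℝ, ‖g x‖ ^ 2) := by
  classical
  set q : ℝ → ℝ := fun x => ‖g x‖^2 with hq
  have hq_cont : Continuous q := (g.continuous.norm.pow 2)
  have hq_nonneg : ∀ x, 0 ≤ q x := fun x => by positivity
  obtain ⟨C, hCpos, hC⟩ := g.decay 0 0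
  have hCg : ∀ x : ℝ, ‖g x‖ ≤ C := fun x => by
    simpa [norm_iteratedFDeriv_zero] using hC x
  have hq_int : Integrable q := by
    refine (g.integrable.norm.const_mul C).mono' hq_cont.aestronglyMeasurable ?_
    refine Eventually.of_forall fun x => ?_
    have h1 : ‖q x‖ = ‖g x‖^2 := by
      simp [hq, abs_of_nonneg (by positivity : (0:ℝ) ≤ ‖g x‖^2)]
    rw [h1, pow_two]
    exact mul_le_mul_of_nonneg_right (hCg x) (norm_nonneg _)
  have hnorm' : ∫ x, q x = 1 := hnorm
  -- change of variables
  have hHasDW : ∀ y ∈ (Set.univ : Set ℝ), HasDerivWithinAt xC (dC y) Set.univ y :=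
    fun y _ => (hasDerivAt_xC y).hasDerivWithinAt
  have hinj : Set.InjOn xC Set.univ := xC_strictMono.injective.injOn
  have himg : xC '' Set.univ = Set.Iio 0 := by rw [Set.image_univ, range_xC]
  have hcv := integral_image_eq_integral_abs_deriv_smul MeasurableSet.univ hHasDW hinj q
  rw [himg] at hcv
  have habs : ∀ y : ℝ, |dC y| = dC y := fun y => abs_of_pos (dC_pos y)
  set ψ : ℝ → ℝ := fun y => dC y * q (xC y) with hψ
  have hcv' : ∫ x in Set.Iio 0, q x = ∫ y, ψ y := by
    rw [hcv, setIntegral_univ]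
    exact integral_congr_ae (Eventually.of_forall fun y => by
      show |dC y| • q (xC y) = dC y * q (xC y)
      rw [smul_eq_mul, habs y])
  have hxC_cont : Continuous xC := by
    rw [continuous_iff_continuousAt]
    exact fun y => (hasDerivAt_xC y).differentiableAt.continuousAt
  have hψ_cont : Continuous ψ := continuous_dC.mul (hq_cont.comp hxC_cont)
  have hψ_int : Integrable ψ := by
    have h2 := (integrableOn_image_iff_integrableOn_abs_deriv_smul
      MeasurableSet.univ hHasDW hinj q).mp (by rw [himg]; exact hq_int.integrableOn)
    have h3 : Integrable (fun y : ℝ => |dC y| • q (xC y)) := integrableOn_univ.mp h2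
    exact h3.congr (Eventually.of_forall fun y => by
      show |dC y| • q (xC y) = dC y * q (xC y)
      rw [smul_eq_mul, habs y])
  set φ : ℝ → ℝ := fun y => (dC y)^2 * q (xC y) with hφ
  have hφ_cont : Continuous φ := ((continuous_dC.pow 2).mul (hq_cont.comp hxC_cont))
  have hφ_nonneg : ∀ y, 0 ≤ φ y := fun y => by
    have := dC_pos y; have := hq_nonneg (xC y); positivity
  have hψφ : ∀ y, φ y ≤ ψ y := by
    intro y
    have h1 := dC_pos y
    have h2 := (dC_lt_one y).le
    have h3 := hq_nonneg (xC y)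
    have : (dC y)^2 ≤ dC y := by nlinarith
    exact mul_le_mul_of_nonneg_right this h3
  have hφ_int : Integrable φ := by
    refine hψ_int.mono' hφ_cont.aestronglyMeasurable ?_
    refine Eventually.of_forall fun y => ?_
    rw [Real.norm_eq_abs, abs_of_nonneg (hφ_nonneg y)]
    exact hψφ y
  -- witness
  have hwit : ∃ x : ℝ, x < 0 ∧ g x ≠ 0 := by
    by_contra h
    push_neg at h
    have h' : ∀ x : ℝ, x < 0 → g x = 0 := fun x hx => h x hx
    have hzero := key g hg h'
    have hq0 : q = fun _ => (0:ℝ) := by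
      funext x
      simp only [hq, hzero]
      simp
    rw [hq0] at hnorm'
    simp at hnorm'
  obtain ⟨x₀, hx₀neg, hx₀⟩ := hwit
  obtain ⟨y₀, hy₀⟩ : ∃ y, xC y = x₀ := by
    have : x₀ ∈ Set.range xC := by rw [range_xC]; exact hx₀neg
    exact this
  have hqy₀ : 0 < q (xC y₀) := by
    rw [hy₀]
    exact pow_pos (norm_pos_iff.mpr hx₀) 2
  have hφy₀ : 0 < φ y₀ := mul_pos (pow_pos (dC_pos y₀) 2) hqy₀
  -- positivity of ∫ φ
  have hpos_of : ∀ (f : ℝ → ℝ), Continuous f → (∀ y, 0 ≤ f y) → Integrable f →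
      0 < f y₀ → 0 < ∫ y, f y := by
    intro f hfc hf0 hfi hfy
    rw [integral_pos_iff_support_of_nonneg hf0 hfi]
    have hopen : IsOpen (Function.support f) := hfc.isOpen_support
    exact hopen.measure_pos volume ⟨y₀, fun h => by rw [h] at hfy; exact lt_irrefl 0 hfy⟩
  have hA_pos : 0 < ∫ y, φ y := hpos_of φ hφ_cont hφ_nonneg hφ_int hφy₀
  -- ∫ φ < ∫ ψ
  have hdiff_pos : 0 < ∫ y, (ψ y - φ y) := by
    refine hpos_of _ (hψ_cont.sub hφ_cont) (fun y => sub_nonneg.mpr (hψφ y))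
      (hψ_int.sub hφ_int) ?_
    have h1 := dC_pos y₀
    have h2 := dC_lt_one y₀
    have : ψ y₀ - φ y₀ = dC y₀ * (1 - dC y₀) * q (xC y₀) := by ring
    rw [this]
    exact mul_pos (mul_pos h1 (by linarith)) hqy₀
  have hsub := integral_sub hψ_int hφ_int
  have hAB : (∫ y, φ y) < ∫ y, ψ y := by
    rw [hsub] at hdiff_pos; linarith
  have hBle : (∫ y, ψ y) ≤ 1 := by
    rw [← hcv', ← hnorm']
    exact setIntegral_le_integral hq_int (Eventually.of_forall hq_nonneg)
  -- conclude
  have hint_eq : (∫ y : ℝ, (deriv xC y) ^ 2 * ‖g (xC y)‖ ^ 2) = ∫ y, φ y := by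
    refine integral_congr_ae (Eventually.of_forall fun y => ?_)
    rw [deriv_xC]
  rw [hint_eq, hnorm]
  refine ⟨hA_pos, by linarith, fun Eo => ⟨by linarith, by linarith⟩⟩
end

section
/- Let x : ℝ → ℝ be three times continuously differentiable with x′(y) > 0 for all y, and let β > 0 and y ∈ ℝ. Then lim_{ε→0} [ 1/(4πε²) − (π/(4β²)) · x′(y) x′(y+ε) / sinh²((π/β)(x(y+ε) − x(y))) ] = −(1/(24π)) S(y) + (π/(12β²)) x′(y)², where S = x‴/x′ − (3/2)(x″/x′)² is the Schwarzian derivative of x. (This is the statement that the outgoing energy-momentum tensor of an incoming thermal state of inverse temperature β equals T̂^Th_{β,in}(y) = T̂_o(y) + x′(y)² · π/(12β²), with T̂_o(y) = −S(y)/(24π) the spontaneous contribution.) -/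
set_option maxHeartbeats 2000000

open Real


open MeasureTheory Set Filter
open scoped ENNReal

lemma aux_slope_zero (h : ℝ → ℝ) (hd : DifferentiableAt ℝ h 0) (h0 : h 0 = 0)
    (h1 : deriv h 0 = 0) : Tendsto (fun t => h t / t) (nhdsWithin 0 {(0:ℝ)}ᶜ) (nhds 0) := by
  have := hasDerivAt_iff_tendsto_slope.mp hd.hasDerivAt
  rw [h1] at this
  refine this.congr (fun t => ?_)
  simp [slope_def_field, h0]

lemma aux_lhop_pow (h : ℝ → ℝ) (n : ℕ) (hd : Differentiable ℝ h) (h0 : h 0 = 0)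
    (hlim : Tendsto (fun t => deriv h t / t ^ n) (nhdsWithin 0 {(0:ℝ)}ᶜ) (nhds 0)) :
    Tendsto (fun t => h t / t ^ (n + 1)) (nhdsWithin 0 {(0:ℝ)}ᶜ) (nhds 0) := by
  apply deriv.lhopital_zero_nhdsNE (g := fun t : ℝ => t ^ (n + 1))
  · exact Eventually.of_forall fun t => hd t
  · filter_upwards [self_mem_nhdsWithin] with t ht
    have ht0 : t ≠ 0 := ht
    rw [deriv_pow_field]
    positivity
  · have : Tendsto h (nhds (0:ℝ)) (nhds (h 0)) := hd.continuous.tendsto 0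
    rw [h0] at this
    exact this.mono_left nhdsWithin_le_nhds
  · have : Tendsto (fun t : ℝ => t ^ (n+1)) (nhds 0) (nhds ((0:ℝ) ^ (n+1))) :=
      (continuous_pow (n+1)).tendsto 0
    rw [zero_pow (Nat.succ_ne_zero n)] at this
    exact this.mono_left nhdsWithin_le_nhds
  · have : Tendsto (fun t : ℝ => (deriv h t / t ^ n) / (n + 1)) (nhdsWithin 0 {(0:ℝ)}ᶜ)
        (nhds (0 / (n+1))) := hlim.div_const _
    rw [zero_div] at this
    refine this.congr (fun t => ?_)
    rw [deriv_pow_field, div_div, mul_comm, Nat.add_sub_cancel]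
    push_cast
    ring_nf

lemma aux_sinh4 : Tendsto (fun t : ℝ => (Real.sinh t - t - t ^ 3 / 6) / t ^ 4)
    (nhdsWithin 0 {(0:ℝ)}ᶜ) (nhds 0) := by
  have hk3 : ∀ t : ℝ, HasDerivAt (fun t => Real.cosh t - 1) (Real.sinh t) t :=
    fun t => (Real.hasDerivAt_cosh t).sub_const 1
  have hk2 : ∀ t : ℝ, HasDerivAt (fun t => Real.sinh t - t) (Real.cosh t - 1) t :=
    fun t => (Real.hasDerivAt_sinh t).sub (hasDerivAt_id t)
  have hk1 : ∀ t : ℝ, HasDerivAt (fun t => Real.cosh t - 1 - t ^ 2 / 2)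
      (Real.sinh t - t) t := by
    intro t
    have h := ((Real.hasDerivAt_cosh t).sub_const 1).sub ((hasDerivAt_pow 2 t).div_const 2)
    refine h.congr_deriv ?_
    simp
  have hk0 : ∀ t : ℝ, HasDerivAt (fun t => Real.sinh t - t - t ^ 3 / 6)
      (Real.cosh t - 1 - t ^ 2 / 2) t := by
    intro t
    have h := ((Real.hasDerivAt_sinh t).sub (hasDerivAt_id t)).sub
      ((hasDerivAt_pow 3 t).div_const 6)
    refine h.congr_deriv ?_
    simp
    ring
  have l0 : Tendsto (fun t : ℝ => (Real.cosh t - 1) / t) (nhdsWithin 0 {(0:ℝ)}ᶜ) (nhds 0) := by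
    refine aux_slope_zero _ (hk3 0).differentiableAt (by norm_num) ?_
    rw [(hk3 0).deriv]; exact Real.sinh_zero
  have l1 : Tendsto (fun t : ℝ => (Real.sinh t - t) / t ^ 2) (nhdsWithin 0 {(0:ℝ)}ᶜ)
      (nhds 0) := by
    refine aux_lhop_pow _ 1 (fun t => (hk2 t).differentiableAt) (by norm_num) ?_
    have hd : deriv (fun t : ℝ => Real.sinh t - t) = fun t => Real.cosh t - 1 :=
      funext fun t => (hk2 t).deriv
    simpa [hd] using l0
  have l2 : Tendsto (fun t : ℝ => (Real.cosh t - 1 - t ^ 2 / 2) / t ^ 3)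
      (nhdsWithin 0 {(0:ℝ)}ᶜ) (nhds 0) := by
    refine aux_lhop_pow _ 2 (fun t => (hk1 t).differentiableAt) (by norm_num) ?_
    have hd : deriv (fun t : ℝ => Real.cosh t - 1 - t ^ 2 / 2) = fun t => Real.sinh t - t :=
      funext fun t => (hk1 t).deriv
    simpa [hd] using l1
  refine aux_lhop_pow _ 3 (fun t => (hk0 t).differentiableAt) (by norm_num) ?_
  have hd : deriv (fun t : ℝ => Real.sinh t - t - t ^ 3 / 6) =
      fun t => Real.cosh t - 1 - t ^ 2 / 2 := funext fun t => (hk0 t).deriv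
  simpa [hd] using l2
/-- For a `C³` map `x` with `x' > 0`, `β > 0` and `y ∈ ℝ`, the
point-split, vacuum-subtracted thermal energy-momentum tensor converges as `ε → 0`:
`lim [1/(4πε²) - (π/(4β²)) x'(y)x'(y+ε)/sinh²((π/β)(x(y+ε)-x(y)))]
  = -(1/(24π)) S(y) + (π/(12β²)) x'(y)²`,
where `S = x'''/x' - (3/2)(x''/x')²` is the Schwarzian derivative. -/
theorem stmt_15 (x : ℝ → ℝ) (hx : ContDiff ℝ 3 x) (hx' : ∀ y : ℝ, 0 < deriv x y)
    (β : ℝ) (hβ : 0 < β) (y : ℝ) :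
    Filter.Tendsto
      (fun ε : ℝ =>
        1 / (4 * Real.pi * ε ^ 2) -
          Real.pi / (4 * β ^ 2) * (deriv x y * deriv x (y + ε)) /
            (Real.sinh (Real.pi / β * (x (y + ε) - x y))) ^ 2)
      (nhdsWithin 0 {(0:ℝ)}ᶜ)
      (nhds (-(1 / (24 * Real.pi)) *
          (deriv (deriv (deriv x)) y / deriv x y -
            3 / 2 * (deriv (deriv x) y / deriv x y) ^ 2) +
        Real.pi / (12 * β ^ 2) * (deriv x y) ^ 2)) := by
  have hπ : (0:ℝ) < Real.pi := Real.pi_pos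
  set a := deriv x y with ha
  set b := deriv (deriv x) y with hb
  set c := deriv (deriv (deriv x)) y with hc
  set l := Real.pi / β with hl_def
  have ha0 : 0 < a := hx' y
  have hl0 : 0 < l := by positivity
  -- differentiability
  have hpeel1 := contDiff_succ_iff_deriv.mp (show ContDiff ℝ (2+1) x by norm_num [hx])
  have hdx : Differentiable ℝ x := hpeel1.1
  have hpeel2 := contDiff_succ_iff_deriv.mp
    (show ContDiff ℝ (1+1) (deriv x) by norm_num [hpeel1.2.2])
  have hdx1 : Differentiable ℝ (deriv x) := hpeel2.1
  have hdx2 : Differentiable ℝ (deriv (deriv x)) :=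
    hpeel2.2.2.differentiable one_ne_zero
  -- shifted HasDerivAt
  have hid1 : ∀ t : ℝ, HasDerivAt (fun s : ℝ => y + s) 1 t :=
    fun t => (hasDerivAt_id t).const_add y
  have hX : ∀ t : ℝ, HasDerivAt (fun s => x (y + s)) (deriv x (y + t)) t := by
    intro t
    exact (HasDerivAt.comp t ((hdx (y+t)).hasDerivAt) (hid1 t)).congr_deriv (mul_one _)
  have hX1 : ∀ t : ℝ, HasDerivAt (fun s => deriv x (y + s)) (deriv (deriv x) (y + t)) t := by
    intro t
    exact (HasDerivAt.comp t ((hdx1 (y+t)).hasDerivAt) (hid1 t)).congr_deriv (mul_one _)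
  have hX2 : ∀ t : ℝ, HasDerivAt (fun s => deriv (deriv x) (y + s))
      (deriv (deriv (deriv x)) (y + t)) t := by
    intro t
    exact (HasDerivAt.comp t ((hdx2 (y+t)).hasDerivAt) (hid1 t)).congr_deriv (mul_one _)
  -- remainder functions and their derivatives
  have hg1' : ∀ t : ℝ, HasDerivAt (fun t => deriv (deriv x) (y + t) - b - c * t)
      (deriv (deriv (deriv x)) (y + t) - c) t := by
    intro t
    have h := ((hX2 t).sub_const b).sub ((hasDerivAt_id t).const_mul c)
    refine h.congr_deriv ?_
    simp
  have hg2' : ∀ t : ℝ, HasDerivAt (fun t => deriv x (y + t) - a - b * t - c * t ^ 2 / 2)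
      (deriv (deriv x) (y + t) - b - c * t) t := by
    intro t
    have h := (((hX1 t).sub_const a).sub ((hasDerivAt_id t).const_mul b)).sub
      (((hasDerivAt_pow 2 t).const_mul c).div_const 2)
    refine h.congr_deriv ?_
    simp
    ring
  have hg3' : ∀ t : ℝ, HasDerivAt
      (fun t => x (y + t) - x y - a * t - b * t ^ 2 / 2 - c * t ^ 3 / 6)
      (deriv x (y + t) - a - b * t - c * t ^ 2 / 2) t := by
    intro t
    have h := ((((hX t).sub_const (x y)).sub ((hasDerivAt_id t).const_mul a)).sub
      (((hasDerivAt_pow 2 t).const_mul b).div_const 2)).sub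
      (((hasDerivAt_pow 3 t).const_mul c).div_const 6)
    refine h.congr_deriv ?_
    simp
    ring
  -- Peano remainders
  have hbase : Tendsto (fun t : ℝ => (deriv (deriv x) (y + t) - b - c * t) / t)
      (nhdsWithin 0 {(0:ℝ)}ᶜ) (nhds 0) := by
    refine aux_slope_zero _ (hg1' 0).differentiableAt (by simp [hb]) ?_
    rw [(hg1' 0).deriv]
    simp [hc]
  have hγ : Tendsto (fun t : ℝ => (deriv x (y + t) - a - b * t - c * t ^ 2 / 2) / t ^ 2)
      (nhdsWithin 0 {(0:ℝ)}ᶜ) (nhds 0) := by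
    have H := aux_lhop_pow (fun t => deriv x (y + t) - a - b * t - c * t ^ 2 / 2) 1
      (fun t => (hg2' t).differentiableAt) (by simp [ha]) ?_
    · simpa using H
    · have hd : deriv (fun t : ℝ => deriv x (y + t) - a - b * t - c * t ^ 2 / 2) =
        fun t => deriv (deriv x) (y + t) - b - c * t := funext fun t => (hg2' t).deriv
      simpa [hd] using hbase
  have hδ : Tendsto
      (fun t : ℝ => (x (y + t) - x y - a * t - b * t ^ 2 / 2 - c * t ^ 3 / 6) / t ^ 3)
      (nhdsWithin 0 {(0:ℝ)}ᶜ) (nhds 0) := by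
    have H := aux_lhop_pow
      (fun t => x (y + t) - x y - a * t - b * t ^ 2 / 2 - c * t ^ 3 / 6) 2
      (fun t => (hg3' t).differentiableAt) (by simp) ?_
    · simpa using H
    · have hd : deriv (fun t : ℝ => x (y + t) - x y - a * t - b * t ^ 2 / 2 - c * t ^ 3 / 6) =
        fun t => deriv x (y + t) - a - b * t - c * t ^ 2 / 2 := funext fun t => (hg3' t).deriv
      simpa [hd] using hγ
  -- basic limits
  have hv : Tendsto (fun t : ℝ => (x (y + t) - x y) / t) (nhdsWithin 0 {(0:ℝ)}ᶜ) (nhds a) := by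
    have h0 : HasDerivAt (fun s => x (y + s)) a 0 := by simpa [ha] using hX 0
    have := hasDerivAt_iff_tendsto_slope.mp h0
    refine this.congr fun t => ?_
    simp [slope_def_field]
  have hu : Tendsto (fun t : ℝ => (x (y + t) - x y)) (nhdsWithin 0 {(0:ℝ)}ᶜ) (nhds 0) := by
    have hcont : Continuous fun t : ℝ => (x (y + t) - x y) :=
      (hdx.continuous.comp (continuous_const.add continuous_id)).sub continuous_const
    have := hcont.tendsto 0
    simp only [add_zero, sub_self] at this
    exact this.mono_left nhdsWithin_le_nhds
  have hlu : Tendsto (fun t : ℝ => l * (x (y + t) - x y)) (nhdsWithin 0 {(0:ℝ)}ᶜ) (nhds 0) := by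
    simpa using hu.const_mul l
  have hS : Tendsto (fun t : ℝ => Real.sinh (l * (x (y + t) - x y))) (nhdsWithin 0 {(0:ℝ)}ᶜ) (nhds 0) := by
    have hcont := Real.continuous_sinh.tendsto 0
    rw [Real.sinh_zero] at hcont
    exact hcont.comp hlu
  have hid : Tendsto (fun t : ℝ => t) (nhdsWithin 0 {(0:ℝ)}ᶜ) (nhds (0:ℝ)) :=
    (continuous_id.tendsto 0).mono_left nhdsWithin_le_nhds
  have hmono : StrictMono x := strictMono_of_deriv_pos hx'
  have hune : ∀ t : ℝ, t ≠ 0 → (x (y + t) - x y) ≠ 0 := by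
    intro t ht
    refine sub_ne_zero.mpr fun hEq => ht ?_
    have := hmono.injective hEq
    linarith
  have hσu : Tendsto (fun t : ℝ =>
      (Real.sinh (l * (x (y + t) - x y)) - l * (x (y + t) - x y) - (l * (x (y + t) - x y)) ^ 3 / 6) / (l * (x (y + t) - x y)) ^ 4)
      (nhdsWithin 0 {(0:ℝ)}ᶜ) (nhds 0) := by
    have hcomp : Tendsto (fun t : ℝ => l * (x (y + t) - x y)) (nhdsWithin 0 {(0:ℝ)}ᶜ)
        (nhdsWithin 0 {(0:ℝ)}ᶜ) := by
      rw [tendsto_nhdsWithin_iff]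
      refine ⟨hlu, ?_⟩
      filter_upwards [self_mem_nhdsWithin] with t ht
      exact mul_ne_zero (ne_of_gt hl0) (hune t ht)
    exact aux_sinh4.comp hcomp
  -- limit of e
  have he : Tendsto (fun ε : ℝ => (c / 6 + (((x (y + ε) - x y) - a * ε - b * ε ^ 2 / 2 - c * ε ^ 3 / 6) / ε ^ 3))) (nhdsWithin 0 {(0:ℝ)}ᶜ) (nhds (c / 6)) := by
    simpa using (tendsto_const_nhds (x := (c/6 : ℝ))).add hδ
  -- limit of F2
  have hF2 : Tendsto (fun ε : ℝ => (2 * a * (c / 6 + (((x (y + ε) - x y) - a * ε - b * ε ^ 2 / 2 - c * ε ^ 3 / 6) / ε ^ 3)) + b ^ 2 / 4 - a * c / 2 - a * ((deriv x (y + ε) - a - b * ε - c * ε ^ 2 / 2) / ε ^ 2) + b * (c / 6 + (((x (y + ε) - x y) - a * ε - b * ε ^ 2 / 2 - c * ε ^ 3 / 6) / ε ^ 3)) * ε + (c / 6 + (((x (y + ε) - x y) - a * ε - b * ε ^ 2 / 2 - c * ε ^ 3 / 6) / ε ^ 3)) ^ 2 * ε ^ 2)) (nhdsWithin 0 {(0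:ℝ)}ᶜ)
      (nhds (b ^ 2 / 4 - a * c / 6)) := by
    have H := (((((he.const_mul (2*a)).add_const (b^2/4)).sub_const (a*c/2)).sub
      (hγ.const_mul a)).add ((he.const_mul b).mul hid)).add ((he.pow 2).mul (hid.pow 2))
    convert H using 2
    ring
  -- limit of G
  have hGlim : Tendsto (fun ε : ℝ => (l ^ 4 * ((x (y + ε) - x y) / ε) ^ 4 * (((Real.sinh (l * (x (y + ε) - x y))) - l * (x (y + ε) - x y) - (l * (x (y + ε) - x y)) ^ 3 / 6) / (l * (x (y + ε) - x y)) ^ 4) * ((Real.sinh (l * (x (y + ε) - x y))) + l * (x (y + ε) - x y) + l ^ 3 * (x (y + ε) - x y) ^ 3 / 6) + l ^ 6 * ((x (y + ε) - x y) / ε) ^ 6 * ε ^ 2 / 36 + l ^ 2 * (2 * a * (c / 6 + (((x (y + ε) - x y) - a * ε - b * ε ^ 2 / 2 - c * ε ^ 3 / 6) / ε ^ 3)) + b ^ 2 / 4 - a * c / 2 - a * ((deriv x (y + ε) - a - b * ε - c * ε ^ 2 / 2) / ε ^ 2) + b * (c / 6 + (((x (y + ε) - x y) - a * ε - b * ε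 ^ 2 / 2 - c * ε ^ 3 / 6) / ε ^ 3)) * ε + (c / 6 + (((x (y + ε) - x y) - a * ε - b * ε ^ 2 / 2 - c * ε ^ 3 / 6) / ε ^ 3)) ^ 2 * ε ^ 2) + l ^ 4 * ((x (y + ε) - x y) / ε) ^ 4 / 3)) (nhdsWithin 0 {(0:ℝ)}ᶜ)
      (nhds (l ^ 2 * (b ^ 2 / 4 - a * c / 6) + l ^ 4 * a ^ 4 / 3)) := by
    have H := ((((((hv.pow 4).const_mul (l^4)).mul hσu).mul
      ((hS.add hlu).add (((hu.pow 3).const_mul (l^3)).div_const 6))).add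
      ((((hv.pow 6).const_mul (l^6)).mul (hid.pow 2)).div_const 36)).add
      (hF2.const_mul (l^2))).add (((hv.pow 4).const_mul (l^4)).div_const 3)
    convert H using 2
    ring
  -- limit of s1
  have hs1 : Tendsto (fun ε : ℝ => (l * ((x (y + ε) - x y) / ε) + l ^ 3 * ((x (y + ε) - x y) / ε) ^ 3 * ε ^ 2 / 6 + l ^ 4 * ((x (y + ε) - x y) / ε) ^ 4 * ε ^ 3 * (((Real.sinh (l * (x (y + ε) - x y))) - l * (x (y + ε) - x y) - (l * (x (y + ε) - x y)) ^ 3 / 6) / (l * (x (y + ε) - x y)) ^ 4))) (nhdsWithin 0 {(0:ℝ)}ᶜ) (nhds (l * a)) := by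
    have H := ((hv.const_mul l).add
      ((((hv.pow 3).const_mul (l^3)).mul (hid.pow 2)).div_const 6)).add
      ((((hv.pow 4).const_mul (l^4)).mul (hid.pow 3)).mul hσu)
    convert H using 2
    ring
  have hden : Tendsto (fun ε : ℝ => 4 * Real.pi * (l * ((x (y + ε) - x y) / ε) + l ^ 3 * ((x (y + ε) - x y) / ε) ^ 3 * ε ^ 2 / 6 + l ^ 4 * ((x (y + ε) - x y) / ε) ^ 4 * ε ^ 3 * (((Real.sinh (l * (x (y + ε) - x y))) - l * (x (y + ε) - x y) - (l * (x (y + ε) - x y)) ^ 3 / 6) / (l * (x (y + ε) - x y)) ^ 4)) ^ 2) (nhdsWithin 0 {(0:ℝ)}ᶜ)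
      (nhds (4 * Real.pi * (l * a) ^ 2)) := (hs1.pow 2).const_mul (4 * Real.pi)
  have hden0 : 4 * Real.pi * (l * a) ^ 2 ≠ 0 := by positivity
  have hq : Tendsto (fun ε : ℝ => (l ^ 4 * ((x (y + ε) - x y) / ε) ^ 4 * (((Real.sinh (l * (x (y + ε) - x y))) - l * (x (y + ε) - x y) - (l * (x (y + ε) - x y)) ^ 3 / 6) / (l * (x (y + ε) - x y)) ^ 4) * ((Real.sinh (l * (x (y + ε) - x y))) + l * (x (y + ε) - x y) + l ^ 3 * (x (y + ε) - x y) ^ 3 / 6) + l ^ 6 * ((x (y + ε) - x y) / ε) ^ 6 * ε ^ 2 / 36 + l ^ 2 * (2 * a * (c / 6 + (((x (y + ε) - x y) - a * ε - b * ε ^ 2 / 2 - c * ε ^ 3 / 6) / ε ^ 3)) + b ^ 2 / 4 - a * c / 2 - a * ((deriv x (y + ε) - a - b * ε - c * ε ^ 2 / 2) / ε ^ 2) + b * (c / 6 + (((x (y + ε) - x y) - a * ε - b * ε ^ 2 / 2 - c * ε ^ 3 / 6) / ε ^ 3)) * ε + (c / 6 + (((x (y + ε) - x y) - a * ε - b *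 ε ^ 2 / 2 - c * ε ^ 3 / 6) / ε ^ 3)) ^ 2 * ε ^ 2) + l ^ 4 * ((x (y + ε) - x y) / ε) ^ 4 / 3) / (4 * Real.pi * (l * ((x (y + ε) - x y) / ε) + l ^ 3 * ((x (y + ε) - x y) / ε) ^ 3 * ε ^ 2 / 6 + l ^ 4 * ((x (y + ε) - x y) / ε) ^ 4 * ε ^ 3 * (((Real.sinh (l * (x (y + ε) - x y))) - l * (x (y + ε) - x y) - (l * (x (y + ε) - x y)) ^ 3 / 6) / (l * (x (y + ε) - x y)) ^ 4)) ^ 2))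
      (nhdsWithin 0 {(0:ℝ)}ᶜ)
      (nhds ((l ^ 2 * (b ^ 2 / 4 - a * c / 6) + l ^ 4 * a ^ 4 / 3) /
        (4 * Real.pi * (l * a) ^ 2))) := hGlim.div hden hden0
  have heq : (fun ε : ℝ => (l ^ 4 * ((x (y + ε) - x y) / ε) ^ 4 * (((Real.sinh (l * (x (y + ε) - x y))) - l * (x (y + ε) - x y) - (l * (x (y + ε) - x y)) ^ 3 / 6) / (l * (x (y + ε) - x y)) ^ 4) * ((Real.sinh (l * (x (y + ε) - x y))) + l * (x (y + ε) - x y) + l ^ 3 * (x (y + ε) - x y) ^ 3 / 6) + l ^ 6 * ((x (y + ε) - x y) / ε) ^ 6 * ε ^ 2 / 36 + l ^ 2 * (2 * a * (c / 6 + (((x (y + ε) - x y) - a * ε - b * ε ^ 2 / 2 - c * ε ^ 3 / 6) / ε ^ 3)) + b ^ 2 / 4 - a * c / 2 - a * ((deriv x (y + ε) - a - b * ε - c * ε ^ 2 / 2) / ε ^ 2) + b * (c / 6 + (((x (y + ε) - x y) - a * ε - b * ε ^ 2 / 2 - c * ε ^ 3 / 6) / ε ^ 3)) * ε + (c / 6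 + (((x (y + ε) - x y) - a * ε - b * ε ^ 2 / 2 - c * ε ^ 3 / 6) / ε ^ 3)) ^ 2 * ε ^ 2) + l ^ 4 * ((x (y + ε) - x y) / ε) ^ 4 / 3) / (4 * Real.pi * (l * ((x (y + ε) - x y) / ε) + l ^ 3 * ((x (y + ε) - x y) / ε) ^ 3 * ε ^ 2 / 6 + l ^ 4 * ((x (y + ε) - x y) / ε) ^ 4 * ε ^ 3 * (((Real.sinh (l * (x (y + ε) - x y))) - l * (x (y + ε) - x y) - (l * (x (y + ε) - x y)) ^ 3 / 6) / (l * (x (y + ε) - x y)) ^ 4)) ^ 2)) =ᶠ[nhdsWithin 0 {(0:ℝ)}ᶜ]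
      (fun ε : ℝ =>
        1 / (4 * Real.pi * ε ^ 2) -
          Real.pi / (4 * β ^ 2) * (a * deriv x (y + ε)) /
            (Real.sinh (l * (x (y + ε) - x y))) ^ 2) := by
    filter_upwards [self_mem_nhdsWithin] with ε hε
    have hε0 : ε ≠ 0 := hε
    have hU : (x (y + ε) - x y) ≠ 0 := hune ε hε0
    have hlU : l * (x (y + ε) - x y) ≠ 0 := mul_ne_zero (ne_of_gt hl0) hU
    have hS0 : (Real.sinh (l * (x (y + ε) - x y))) ≠ 0 := fun h => hlU (Real.sinh_eq_zero.mp h)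
    have eqA : (l * ((x (y + ε) - x y) / ε) + l ^ 3 * ((x (y + ε) - x y) / ε) ^ 3 * ε ^ 2 / 6 + l ^ 4 * ((x (y + ε) - x y) / ε) ^ 4 * ε ^ 3 * (((Real.sinh (l * (x (y + ε) - x y))) - l * (x (y + ε) - x y) - (l * (x (y + ε) - x y)) ^ 3 / 6) / (l * (x (y + ε) - x y)) ^ 4)) = (Real.sinh (l * (x (y + ε) - x y))) / ε := by
      field_simp
      ring
    have eqB : (l ^ 4 * ((x (y + ε) - x y) / ε) ^ 4 * (((Real.sinh (l * (x (y + ε) - x y))) - l * (x (y + ε) - x y) - (l * (x (y + ε) - x y)) ^ 3 / 6) / (l * (x (y + ε) - x y)) ^ 4) * ((Real.sinh (l * (x (y + ε) - x y))) + l * (x (y + ε) - x y) + l ^ 3 * (x (y + ε) - x y) ^ 3 / 6) + l ^ 6 * ((x (y + ε) - x y) / ε) ^ 6 * ε ^ 2 / 36 + l ^ 2 * (2 * a * (c / 6 + (((x (y + ε) - x y) - a * ε - b * ε ^ 2 / 2 - c * ε ^ 3 / 6) / ε ^ 3)) + b ^ 2 / 4 - a * c / 2 - a * ((deriv x (y +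 ε) - a - b * ε - c * ε ^ 2 / 2) / ε ^ 2) + b * (c / 6 + (((x (y + ε) - x y) - a * ε - b * ε ^ 2 / 2 - c * ε ^ 3 / 6) / ε ^ 3)) * ε + (c / 6 + (((x (y + ε) - x y) - a * ε - b * ε ^ 2 / 2 - c * ε ^ 3 / 6) / ε ^ 3)) ^ 2 * ε ^ 2) + l ^ 4 * ((x (y + ε) - x y) / ε) ^ 4 / 3) = ((Real.sinh (l * (x (y + ε) - x y))) ^ 2 - l ^ 2 * ε ^ 2 * a * deriv x (y + ε)) / ε ^ 4 := by
      field_simp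
      ring
    rw [eqA, eqB]
    rw [hl_def] at hS0 ⊢
    field_simp
  have final := hq.congr' heq
  rw [hl_def] at final
  convert final using 2
  have h1 : a ≠ 0 := ne_of_gt ha0
  have h2 : β ≠ 0 := ne_of_gt hβ
  have h3 : Real.pi ≠ 0 := ne_of_gt hπ
  field_simp
  ring
end

section
/- Let x : ℝ → ℝ be a continuous strictly increasing map, f : ℝ → ℂ integrable, and β > 0. Then the function k ↦ |F̌(k)|²/(2k(e^{βk} − 1)) is nonnegative almost everywhere on ℝ, and as an identity in [0, ∞], N̄^Th_{β,in}[f] = ∫_ℝ |F̌(k)|²/(2k(e^{βk} − 1)) dk = N̄_o[f] + ∫_0^∞ (|F̌(k)|² + |F̌(−k)|²)/(2k(e^{βk} − 1)) dk. In particular N̄_o[f] ≤ N̄^Th_{β,in}[f] for all β > 0. -/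
open MeasureTheory Set Filter
open scoped ENNReal

/-- The mean number of particles emitted when the incoming state is thermal at inverse
temperature `β`: `N̄^Th_{β,in}[f] = ∫_ℝ |F̌(k)|²/(2k(e^{βk}-1)) dk`. -/
noncomputable def NthIn (x : ℝ → ℝ) (β : ℝ) (f : ℝ → ℂ) : ℝ≥0∞ :=
  ∫⁻ k : ℝ, ENNReal.ofReal (‖Fk x f k‖ ^ 2 / (2 * k * (Real.exp (β * k) - 1)))

lemma fk_continuous (x : ℝ → ℝ) (hxc : Continuous x) (f : ℝ → ℂ)
    (hf : MeasureTheory.Integrable f) : Continuous (Fk x f) := by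
  unfold Fk
  refine continuous_const.mul ?_
  refine MeasureTheory.continuous_of_dominated (bound := fun y => ‖f y‖) ?_ ?_ hf.norm ?_
  · intro k
    exact hf.1.mul ((Complex.continuous_exp.comp (by continuity)).aestronglyMeasurable)
  · intro k
    filter_upwards with y
    have : ‖Complex.exp (-Complex.I * (k:ℂ) * (x y : ℂ))‖ = 1 := by
      rw [Complex.norm_exp]
      simp
    rw [norm_mul, this, mul_one]
  · filter_upwards with y
    exact continuous_const.mul (Complex.continuous_exp.comp (by continuity))


/-- For a continuous strictly increasing `x`, integrable `f` and `β > 0`: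
the integrand `k ↦ |F̌(k)|²/(2k(e^{βk}-1))` is a.e. nonnegative, and in `[0,∞]`,
`N̄^Th_{β,in}[f] = N̄_o[f] + ∫_0^∞ (|F̌(k)|² + |F̌(-k)|²)/(2k(e^{βk}-1)) dk`;
in particular `N̄_o[f] ≤ N̄^Th_{β,in}[f]`. -/
theorem stmt_16 (x : ℝ → ℝ) (hxc : Continuous x) (hxm : StrictMono x)
    (f : ℝ → ℂ) (hf : MeasureTheory.Integrable f) (β : ℝ) (hβ : 0 < β) :
    (∀ᵐ k : ℝ, 0 ≤ ‖Fk x f k‖ ^ 2 / (2 * k * (Real.exp (β * k) - 1))) ∧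
    NthIn x β f = No x f +
      ∫⁻ k in Set.Ioi (0:ℝ), ENNReal.ofReal
        ((‖Fk x f k‖ ^ 2 + ‖Fk x f (-k)‖ ^ 2) /
          (2 * k * (Real.exp (β * k) - 1))) ∧
    No x f ≤ NthIn x β f := by
  have hFc : Continuous (Fk x f) := fk_continuous x hxc f hf
  set D : ℝ → ℝ := fun k => 2 * k * (Real.exp (β * k) - 1) with hD
  have hDnn : ∀ k, 0 ≤ D k := by
    intro k
    simp only [hD]
    rcases le_or_gt 0 k with hk | hk
    · have : 1 ≤ Real.exp (β * k) := Real.one_le_exp (by positivity)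
      nlinarith
    · have : Real.exp (β * k) ≤ 1 := Real.exp_le_one_iff.mpr (by nlinarith)
      nlinarith
  have hae : ∀ᵐ k : ℝ, 0 ≤ ‖Fk x f k‖ ^ 2 / (2 * k * (Real.exp (β * k) - 1)) := by
    filter_upwards with k
    exact div_nonneg (by positivity) (hDnn k)
  -- measurability
  have hDm : Measurable D := by
    have : Continuous D := by
      simp only [hD]; fun_prop
    exact this.measurable
  set g : ℝ → ℝ≥0∞ := fun k => ENNReal.ofReal (‖Fk x f k‖ ^ 2 / D k) with hg
  have hgm : Measurable g :=
    ENNReal.measurable_ofReal.comp (((hFc.norm.measurable).pow_const 2).div hDm)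
  have hAm : Measurable fun k => ENNReal.ofReal (‖Fk x f (-k)‖ ^ 2 / D k) :=
    ENNReal.measurable_ofReal.comp
      ((((hFc.comp continuous_neg).norm.measurable).pow_const 2).div hDm)
  have hNom : Measurable fun k : ℝ => ENNReal.ofReal (‖Fk x f (-k)‖ ^ 2 / (2 * k)) :=
    ENNReal.measurable_ofReal.comp
      ((((hFc.comp continuous_neg).norm.measurable).pow_const 2).div (measurable_const.mul measurable_id))
  -- split the real line
  have hsplit : NthIn x β f = (∫⁻ k in Set.Iio (0:ℝ), g k) + ∫⁻ k in Set.Ioi (0:ℝ), g k := by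
    have h1 : NthIn x β f = ∫⁻ k in (Set.Iio (0:ℝ) ∪ Set.Ioi 0), g k := by
      rw [NthIn]
      rw [← MeasureTheory.setLIntegral_univ]
      refine MeasureTheory.setLIntegral_congr ?_
      symm
      rw [MeasureTheory.ae_eq_univ]
      have : (Set.Iio (0:ℝ) ∪ Set.Ioi 0)ᶜ = {0} := by
        ext k; simp [not_lt, le_antisymm_iff, and_comm]
      rw [this]
      exact measure_singleton 0
    rw [h1, MeasureTheory.lintegral_union measurableSet_Ioi
      ((Set.Iio_disjoint_Ici le_rfl).mono_right Set.Ioi_subset_Ici_self)]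
  -- substitution on the negative half-line
  have hsub : (∫⁻ k in Set.Iio (0:ℝ), g k) = ∫⁻ k in Set.Ioi (0:ℝ), g (-k) := by
    have hrestr : (volume : Measure ℝ).restrict (Set.Iio 0)
        = Measure.map Neg.neg ((volume : Measure ℝ).restrict (Set.Ioi 0)) := by
      conv_lhs => rw [← Measure.map_neg_eq_self (volume : Measure ℝ)]
      rw [Measure.restrict_map measurable_neg measurableSet_Iio]
      congr 1
      ext y; simp
    rw [hrestr, MeasureTheory.lintegral_map hgm measurable_neg]
  -- pointwise identity for k > 0
  have hpt : ∀ k ∈ Set.Ioi (0:ℝ),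
      g (-k) = ENNReal.ofReal (‖Fk x f (-k)‖ ^ 2 / (2 * k))
        + ENNReal.ofReal (‖Fk x f (-k)‖ ^ 2 / D k) := by
    intro k hk
    have hk0 : (0:ℝ) < k := hk
    have hE : 1 < Real.exp (β * k) := Real.one_lt_exp_iff.mpr (by positivity)
    have hDk : 0 < D k := by simp only [hD]; nlinarith
    have h1 : Real.exp (β * -k) = (Real.exp (β * k))⁻¹ := by
      rw [mul_neg, Real.exp_neg]
    have hreal : ‖Fk x f (-k)‖ ^ 2 / (2 * -k * (Real.exp (β * -k) - 1))
        = ‖Fk x f (-k)‖ ^ 2 / (2 * k) + ‖Fk x f (-k)‖ ^ 2 / (2 * k * (Real.exp (β * k) - 1)) := by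
      rw [h1]
      have hEne : Real.exp (β * k) ≠ 0 := (Real.exp_pos _).ne'
      have h2 : Real.exp (β * k) - 1 ≠ 0 := sub_ne_zero.mpr hE.ne'
      have hden : 2 * -k * ((Real.exp (β * k))⁻¹ - 1)
          = 2 * k * (Real.exp (β * k) - 1) / Real.exp (β * k) := by
        field_simp
        ring
      rw [hden, div_div_eq_mul_div]
      have h2k : (2:ℝ) * k ≠ 0 := mul_ne_zero two_ne_zero hk0.ne'
      rw [div_add_div _ _ h2k (mul_ne_zero h2k h2),
        div_eq_div_iff (mul_ne_zero h2k h2) (mul_ne_zero h2k (mul_ne_zero h2k h2))]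
      ring
    simp only [hg, hD, hreal]
    rw [ENNReal.ofReal_add (by positivity) (div_nonneg (by positivity) hDk.le)]
  have hIio : (∫⁻ k in Set.Iio (0:ℝ), g k)
      = No x f + ∫⁻ k in Set.Ioi (0:ℝ), ENNReal.ofReal (‖Fk x f (-k)‖ ^ 2 / D k) := by
    rw [hsub, MeasureTheory.setLIntegral_congr_fun measurableSet_Ioi
      hpt,
      MeasureTheory.lintegral_add_left hNom]
    rfl
  -- the Ioi part of the RHS splits
  have hIoi : (∫⁻ k in Set.Ioi (0:ℝ), ENNReal.ofReal
        ((‖Fk x f k‖ ^ 2 + ‖Fk x f (-k)‖ ^ 2) / D k))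
      = (∫⁻ k in Set.Ioi (0:ℝ), g k)
        + ∫⁻ k in Set.Ioi (0:ℝ), ENNReal.ofReal (‖Fk x f (-k)‖ ^ 2 / D k) := by
    rw [← MeasureTheory.lintegral_add_left hgm]
    refine MeasureTheory.setLIntegral_congr_fun measurableSet_Ioi
      ?_
    intro k hk
    dsimp only
    rw [add_div, ENNReal.ofReal_add (div_nonneg (by positivity) (hDnn k))
      (div_nonneg (by positivity) (hDnn k))]
  have hmain : NthIn x β f = No x f +
      ∫⁻ k in Set.Ioi (0:ℝ), ENNReal.ofReal
        ((‖Fk x f k‖ ^ 2 + ‖Fk x f (-k)‖ ^ 2) / (2 * k * (Real.exp (β * k) - 1))) := by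
    calc NthIn x β f = (∫⁻ k in Set.Iio (0:ℝ), g k) + ∫⁻ k in Set.Ioi (0:ℝ), g k := hsplit
    _ = (No x f + ∫⁻ k in Set.Ioi (0:ℝ), ENNReal.ofReal (‖Fk x f (-k)‖ ^ 2 / D k))
        + ∫⁻ k in Set.Ioi (0:ℝ), g k := by rw [hIio]
    _ = No x f + ((∫⁻ k in Set.Ioi (0:ℝ), g k)
        + ∫⁻ k in Set.Ioi (0:ℝ), ENNReal.ofReal (‖Fk x f (-k)‖ ^ 2 / D k)) := by ring
    _ = _ := by rw [← hIoi]
  exact ⟨hae, hmain, hmain ▸ le_self_add⟩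
end
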